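/- Let n ≥ 3 and let A = {a_0 < … < a_{k−1}} ⊆ C_n with 0 < a_0 and a_{k−1} < n−1 (an internal simplex). Then for each m ∈ {0,…,k−1}, the discrete 2-neighborhood DN^2_m = {α ∈ σ^(n){a_0,…,a_{k−1}} : α(i) = a_m for at least n−2 elements i of C_n} is a subsemiring of the simplex: it is closed under the pointwise maximum (α+β)(x) = max(α(x), β(x)) and under composition (α·β)(x) = β(α(x)). -/

import Mathlib

/-- The simplex σ^(n){a_0,…,a_{k−1}}: monotone maps Fin n → Fin n whose image
is contained in the range of the strictly monotone enumeration `a : Fin k → Fin n`. -/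
def EndoSimplex (n k : ℕ) (a : Fin k → Fin n) : Set (Fin n → Fin n) :=
  {α | Monotone α ∧ ∀ x, α x ∈ Set.range a}

/-- Number of points of `Fin n` at which `α` takes the value `v`. -/
def FixCount (n : ℕ) (α : Fin n → Fin n) (v : Fin n) : ℕ :=
  (Finset.univ.filter (fun i => α i = v)).card

/-- Discrete t-neighborhood DN^t_m of the vertex `ā_m` of the simplex:
elements of the simplex taking the value `a m` at least `n − t` times. -/
def DN (n k : ℕ) (a : Fin k → Fin n) (m : Fin k) (t : ℕ) : Set (Fin n → Fin n) :=
  {α | α ∈ EndoSimplex n k a ∧ n - t ≤ FixCount n α (a m)}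

/-- Bad set: points where α differs from v. -/
private def Bad (n : ℕ) (α : Fin n → Fin n) (v : Fin n) : Finset (Fin n) :=
  Finset.univ.filter (fun i => ¬ α i = v)

private lemma fixcount_eq (n : ℕ) (α : Fin n → Fin n) (v : Fin n) :
    FixCount n α v + (Bad n α v).card = n := by
  simpa [FixCount, Bad] using
    Finset.card_filter_add_card_filter_not (s := (Finset.univ : Finset (Fin n)))
      (p := fun i => α i = v)

private lemma mem_bad {n : ℕ} {α : Fin n → Fin n} {v i : Fin n} :
    i ∈ Bad n α v ↔ ¬ α i = v := by simp [Bad]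

/-- In an internal simplex, any element of DN² fixes the vertex value. -/
private lemma fixes_vertex (n k : ℕ) (hn : 3 ≤ n) (hk : 0 < k)
    (a : Fin k → Fin n) (ha : StrictMono a)
    (h0 : 0 < (a ⟨0, hk⟩ : ℕ))
    (h1 : (a ⟨k - 1, Nat.sub_lt hk Nat.one_pos⟩ : ℕ) < n - 1)
    (m : Fin k) (β : Fin n → Fin n) (hβ : β ∈ DN n k a m 2) :
    β (a m) = a m := by
  obtain ⟨⟨hmono, hrange⟩, hcnt⟩ := hβ
  set v := a m with hv
  have hbadcard : (Bad n β v).card ≤ 2 := by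
    have := fixcount_eq n β v
    omega
  -- bounds on v
  have hv0 : 0 < (v : ℕ) := by
    have : a ⟨0, hk⟩ ≤ v := ha.monotone (by exact Fin.mk_le_of_le_val (by omega))
    exact lt_of_lt_of_le h0 this
  have hv1 : (v : ℕ) < n - 1 := by
    have : v ≤ a ⟨k - 1, by omega⟩ := ha.monotone (by
      rw [Fin.le_def]
      exact Nat.le_sub_one_of_lt m.2)
    exact lt_of_le_of_lt this h1
  rcases lt_trichotomy (β v) v with h | h | h
  · -- β v < v : all i ≤ v are bad, and β v ∈ range a forces β v ≥ a 0 ≥ 1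
    exfalso
    have hsub : Finset.Iic v ⊆ Bad n β v := by
      intro i hi
      rw [mem_bad]
      intro hiv
      have : β i ≤ β v := hmono (Finset.mem_Iic.mp hi)
      rw [hiv] at this
      exact absurd h (not_lt_of_ge this)
    have hc := Finset.card_le_card hsub
    rw [Fin.card_Iic] at hc
    -- so v + 1 ≤ 2, i.e. v ≤ 1
    have hvle : (v : ℕ) ≤ 1 := by omega
    -- but β v ∈ range a, so β v ≥ a 0 ≥ 1, while β v < v ≤ 1
    obtain ⟨j, hj⟩ := hrange v
    have : a ⟨0, hk⟩ ≤ a j := ha.monotone (show (⟨0, hk⟩ : Fin k) ≤ j by rw [Fin.le_def]; exact Nat.zero_le _)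
    have : 1 ≤ (β v : ℕ) := by
      rw [← hj]; omega
    have : (β v : ℕ) < (v : ℕ) := h
    omega
  · exact h
  · -- β v > v : all i ≥ v are bad
    exfalso
    have hsub : Finset.Ici v ⊆ Bad n β v := by
      intro i hi
      rw [mem_bad]
      intro hiv
      have : β v ≤ β i := hmono (Finset.mem_Ici.mp hi)
      rw [hiv] at this
      exact absurd h (not_lt_of_ge this)
    have hc := Finset.card_le_card hsub
    rw [Fin.card_Ici] at hc
    -- so n - v ≤ 2
    -- but β v ∈ range a, so β v ≤ a (k-1) ≤ n - 2, while β v > v ≥ n - 2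
    obtain ⟨j, hj⟩ := hrange v
    have hja : a j ≤ a ⟨k - 1, by omega⟩ := ha.monotone (by
      rw [Fin.le_def]
      exact Nat.le_sub_one_of_lt j.2)
    have hβv : (β v : ℕ) ≤ n - 2 := by
      rw [← hj]; omega
    have : (v : ℕ) < (β v : ℕ) := h
    have hvn : (v : ℕ) < n := v.2
    omega

/-- in an internal simplex (0 < a_0 and a_{k−1} < n−1), the
discrete 2-neighborhood DN^2_m of each vertex is a subsemiring of the simplex:
closed under pointwise maximum and composition. -/
theorem internal_DN2_is_subsemiring (n k : ℕ) (hn : 3 ≤ n) (hk : 0 < k)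
    (a : Fin k → Fin n) (ha : StrictMono a)
    (h0 : 0 < (a ⟨0, hk⟩ : ℕ))
    (h1 : (a ⟨k - 1, by omega⟩ : ℕ) < n - 1)
    (m : Fin k)
    (α β : Fin n → Fin n)
    (hα : α ∈ DN n k a m 2) (hβ : β ∈ DN n k a m 2) :
    (fun x => max (α x) (β x)) ∈ DN n k a m 2 ∧
    (fun x => β (α x)) ∈ DN n k a m 2 := by
  obtain ⟨⟨hαm, hαr⟩, hαc⟩ := hα
  obtain ⟨⟨hβm, hβr⟩, hβc⟩ := hβ
  set v := a m with hv
  -- counting helper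
  have key : ∀ γ : Fin n → Fin n, ∀ δ : Fin n → Fin n,
      Bad n γ v ⊆ Bad n δ v → FixCount n δ v ≤ FixCount n γ v := by
    intro γ δ hsub
    have h1 := fixcount_eq n γ v
    have h2 := fixcount_eq n δ v
    have := Finset.card_le_card hsub
    omega
  constructor
  · refine ⟨⟨?_, ?_⟩, ?_⟩
    · intro x y hxy
      exact max_le_max (hαm hxy) (hβm hxy)
    · intro x
      obtain ⟨i, hi⟩ := hαr x
      obtain ⟨j, hj⟩ := hβr x
      exact ⟨max i j, by rw [ha.monotone.map_max, hi, hj]⟩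
    · -- comparability of the "exceeding" upper sets
      have hcomp : (∀ i, v < α i → v < β i) ∨ (∀ i, v < β i → v < α i) := by
        by_contra hcon
        push_neg at hcon
        obtain ⟨⟨x, hx1, hx2⟩, ⟨y, hy1, hy2⟩⟩ := hcon
        rcases le_total x y with hxy | hxy
        · exact absurd (lt_of_lt_of_le hx1 (hαm hxy)) (not_lt_of_ge hy2)
        · exact absurd (lt_of_lt_of_le hy1 (hβm hxy)) (not_lt_of_ge hx2)
      rcases hcomp with hc | hc
      · -- exceed(α) ⊆ exceed(β) : bad(max) ⊆ bad(β)
        refine le_trans hβc (key _ β ?_)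
        intro i hi
        rw [mem_bad] at hi ⊢
        intro hbi
        apply hi
        rw [hbi]
        rcases le_or_gt (α i) v with h | h
        · exact max_eq_right h
        · exact absurd (hc i h) (by rw [hbi]; exact lt_irrefl v)
      · refine le_trans hαc (key _ α ?_)
        intro i hi
        rw [mem_bad] at hi ⊢
        intro hai
        apply hi
        rw [hai]
        rcases le_or_gt (β i) v with h | h
        · exact max_eq_left h
        · exact absurd (hc i h) (by rw [hai]; exact lt_irrefl v)
  · have hfix : β v = v := fixes_vertex n k hn hk a ha h0 h1 m β ⟨⟨hβm, hβr⟩, hβc⟩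
    refine ⟨⟨hβm.comp hαm, fun x => hβr (α x)⟩, ?_⟩
    refine le_trans hαc (key _ α ?_)
    intro i hi
    rw [mem_bad] at hi ⊢
    intro hai
    exact hi (by rw [hai]; exact hfix)
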